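/- Let E be a row-finite graph. The graph E has a cycle with an exit if and only if there exists a ∈ M_E^{gr} and a negative integer n such that ^n a > a, i.e., ^n a = a + x for some nonzero x. -/

import Mathlib

set_option linter.unusedSectionVars false

/-- The algebraic preorder on a commutative monoid: `a ≤ b` iff `b = a + c` for some `c`. -/
def algLE {M : Type*} [AddCommMonoid M] (a b : M) : Prop := ∃ c, b = a + c

/-- A row-finite directed graph: vertices `V`, edges `Ed`, source `s`, range `r`,
and for each vertex the (finite) set of edges it emits. -/
structure RFGraph (V : Type) (Ed : Type) where
  s : Ed → V
  r : Ed → V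
  emit : V → Finset Ed
  mem_emit : ∀ e v, e ∈ emit v ↔ s e = v

namespace RFGraph

variable {V Ed : Type} [DecidableEq V] (G : RFGraph V Ed)

/-- The one-step rewriting relation `→₁` on the free commutative monoid `Multiset V`:
replace one occurrence of a non-sink vertex `v` by the sum of ranges of edges emitted by `v`. -/
def Step1 (a b : Multiset V) : Prop :=
  ∃ v : V, v ∈ a ∧ G.emit v ≠ ∅ ∧ b = a.erase v + (G.emit v).val.map G.r

/-- The reflexive-transitive closure `→` of `→₁`. -/
def Step : Multiset V → Multiset V → Prop := Relation.ReflTransGen G.Step1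

/-- The congruence on the free commutative monoid generated by `→₁`. -/
def gcon : AddCon (Multiset V) := addConGen G.Step1

/-- The graph monoid `M_E`. -/
def GM := G.gcon.Quotient

instance : AddCommMonoid G.GM := inferInstanceAs (AddCommMonoid G.gcon.Quotient)

/-- One-step rewriting for the talented monoid: replace `v(i)` by `Σ_{e ∈ s⁻¹(v)} r(e)(i+1)`. -/
def TStep1 (a b : Multiset (V × ℤ)) : Prop :=
  ∃ (v : V) (i : ℤ), (v, i) ∈ a ∧ G.emit v ≠ ∅ ∧
    b = a.erase (v, i) + (G.emit v).val.map (fun e => (G.r e, i + 1))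

/-- The congruence generated by the talented one-step relation. -/
def tcon : AddCon (Multiset (V × ℤ)) := addConGen G.TStep1

/-- The talented monoid `M_E^{gr}`. -/
def TM := G.tcon.Quotient

instance : AddCommMonoid G.TM := inferInstanceAs (AddCommMonoid G.tcon.Quotient)

/-- The generator `v(i)` of the talented monoid. -/
def tgen (v : V) (i : ℤ) : G.TM := G.tcon.mk' {(v, i)}

/-- The shift `v(i) ↦ v(i+n)` on the free commutative monoid `Multiset (V × ℤ)`. -/
def shiftMul (n : ℤ) : Multiset (V × ℤ) →+ Multiset (V × ℤ) where
  toFun a := a.map fun p => (p.1, p.2 + n)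
  map_zero' := rfl
  map_add' a b := Multiset.map_add (fun p => (p.1, p.2 + n)) a b

lemma shift_inj (n : ℤ) : Function.Injective (fun p : V × ℤ => (p.1, p.2 + n)) := by
  rintro ⟨a, b⟩ ⟨c, d⟩ h
  simp only [Prod.mk.injEq] at h
  exact Prod.ext h.1 (by omega)

lemma tstep1_shift (n : ℤ) {a b : Multiset (V × ℤ)} (h : G.TStep1 a b) :
    G.TStep1 (shiftMul n a) (shiftMul n b) := by
  obtain ⟨v, i, hv, hne, rfl⟩ := h
  refine ⟨v, i + n, Multiset.mem_map.2 ⟨(v, i), hv, rfl⟩, hne, ?_⟩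
  show Multiset.map _ _ = _
  rw [Multiset.map_add]
  congr 1
  · exact (Multiset.map_erase _ (shift_inj n) (v, i) a)
  · rw [Multiset.map_map]
    congr 1
    funext e
    simp only [Function.comp_apply]
    congr 1
    omega

lemma tcon_shift (n : ℤ) {a b : Multiset (V × ℤ)} (h : G.tcon a b) :
    G.tcon (shiftMul n a) (shiftMul n b) := by
  have hle : addConGen G.TStep1 ≤
      { r := fun a b => G.tcon (shiftMul n a) (shiftMul n b)
        iseqv := ⟨fun _ => G.tcon.refl _, fun h => G.tcon.symm h,
          fun h₁ h₂ => G.tcon.trans h₁ h₂⟩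
        add' := fun h₁ h₂ => by
          simpa only [map_add] using G.tcon.add h₁ h₂ } := by
    refine AddCon.addConGen_le.2 fun x y hxy => ?_
    exact AddConGen.Rel.of _ _ (G.tstep1_shift n hxy)
  exact hle h

/-- The `ℤ`-action on the talented monoid, `ⁿ(v(i)) = v(i+n)`. -/
def tshift (n : ℤ) : G.TM →+ G.TM :=
  G.tcon.lift (G.tcon.mk'.comp (shiftMul n)) (by
    intro a b h
    show G.tcon.mk' (shiftMul n a) = G.tcon.mk' (shiftMul n b)
    exact (AddCon.eq _).2 (G.tcon_shift n h))

/-- Reachability: there is a (possibly trivial) path from `u` to `v`. -/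
def Reaches (u v : V) : Prop :=
  Relation.ReflTransGen (fun a b => ∃ e : Ed, G.s e = a ∧ G.r e = b) u v

/-- A cycle: a nonempty path of edges, closed up, with distinct source vertices. -/
def IsCycle (p : List Ed) : Prop :=
  ∃ h : p ≠ [], List.Chain' (fun e f => G.r e = G.s f) p ∧
    G.r (p.getLast h) = G.s (p.head h) ∧ (p.map G.s).Nodup

/-- The cycle `p` has an exit: some vertex on it emits an edge not on the cycle. -/
def HasExit (p : List Ed) : Prop :=
  ∃ e : Ed, (∃ f ∈ p, G.s e = G.s f) ∧ e ∉ p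

/-- The cycle `p` has no exit: every vertex on it emits exactly its cycle edge. -/
def NoExit (p : List Ed) : Prop :=
  ∀ e ∈ p, G.emit (G.s e) = {e}

/-- `ℤ`-order-ideals of the talented monoid. -/
def IsOrderIdeal (I : Set G.TM) : Prop :=
  (0 : G.TM) ∈ I ∧ (∀ a b : G.TM, a ∈ I → b ∈ I → a + b ∈ I) ∧
    (∀ (n : ℤ) (a : G.TM), a ∈ I → G.tshift n a ∈ I) ∧
    (∀ a b : G.TM, algLE a b → b ∈ I → a ∈ I)

/-- The smallest `ℤ`-order-ideal of `M_E^{gr}` containing `v(0)`. -/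
def genIdeal (v : V) : Set G.TM :=
  ⋂₀ {I : Set G.TM | G.IsOrderIdeal I ∧ G.tgen v 0 ∈ I}

/-- Minimality in the talented monoid: `0 ≠ b ≤ a` implies `a ≤ b`. -/
def TMin (a : G.TM) : Prop := ∀ b : G.TM, b ≠ 0 → algLE b a → algLE a b

/-- The covering graph `\bar E`. -/
def cover : RFGraph (V × ℤ) (Ed × ℤ) where
  s p := (G.s p.1, p.2)
  r p := (G.r p.1, p.2 + 1)
  emit p := (G.emit p.1).map ⟨fun e => (e, p.2), fun a b h => by
    simpa using congrArg Prod.fst h⟩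
  mem_emit := by
    rintro ⟨e, n⟩ ⟨v, m⟩
    simp only [Finset.mem_map, Function.Embedding.coeFn_mk, Prod.mk.injEq, G.mem_emit]
    constructor
    · rintro ⟨a, ha, rfl, rfl⟩; exact ⟨ha, rfl⟩
    · rintro ⟨rfl, rfl⟩; first | exact ⟨e, rfl, rfl, rfl⟩ | exact ⟨e, rfl, rfl⟩ | exact ⟨e, by simp⟩

/-- The set of vertices on a cycle. -/
def cycVerts (p : List Ed) : Set V := {v | ∃ e ∈ p, G.s e = v}

end RFGraph

namespace RFGraph

section Walks

variable {V Ed : Type} [DecidableEq V] (G : RFGraph V Ed)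

/-- A walk along edges: `GWalk p v w` means `p` is a path of edges from `v` to `w`. -/
def GWalk : List Ed → V → V → Prop
  | [], v, w => v = w
  | e :: p, v, w => G.s e = v ∧ GWalk p (G.r e) w

variable {G}

lemma gwalk_append {p q : List Ed} {v w : V} :
    G.GWalk (p ++ q) v w ↔ ∃ u, G.GWalk p v u ∧ G.GWalk q u w := by
  induction p generalizing v with
  | nil =>
    constructor
    · intro h; exact ⟨v, rfl, h⟩
    · rintro ⟨u, rfl, h⟩; exact h
  | cons e p ih =>
    constructor
    · rintro ⟨rfl, h⟩
      obtain ⟨u, h1, h2⟩ := ih.1 h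
      exact ⟨u, ⟨rfl, h1⟩, h2⟩
    · rintro ⟨u, ⟨rfl, h1⟩, h2⟩
      exact ⟨rfl, ih.2 ⟨u, h1, h2⟩⟩

lemma gwalk_singleton {e : Ed} {v w : V} :
    G.GWalk [e] v w ↔ G.s e = v ∧ G.r e = w := by
  constructor
  · rintro ⟨rfl, h⟩; exact ⟨rfl, h⟩
  · rintro ⟨rfl, rfl⟩; exact ⟨rfl, rfl⟩

lemma gwalk_chain' {p : List Ed} {v w : V} (h : G.GWalk p v w) :
    List.Chain' (fun e f => G.r e = G.s f) p := by
  induction p generalizing v with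
  | nil => exact List.isChain_nil
  | cons e p ih =>
    obtain ⟨rfl, h2⟩ := h
    cases p with
    | nil => exact List.isChain_singleton _
    | cons f q =>
      obtain ⟨hf, h3⟩ := h2
      exact List.IsChain.cons_cons hf.symm (ih (v := G.r e) ⟨hf, h3⟩)

lemma gwalk_getLast {p : List Ed} {v w : V} (h : G.GWalk p v w) (hne : p ≠ []) :
    G.r (p.getLast hne) = w := by
  induction p generalizing v with
  | nil => exact absurd rfl hne
  | cons e p ih =>
    obtain ⟨rfl, h2⟩ := h
    cases p with
    | nil => exact h2
    | cons f q => simpa [List.getLast] using ih h2 (by simp)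

lemma gwalk_of_chain' : ∀ (p : List Ed) (hne : p ≠ []),
    List.Chain' (fun e f => G.r e = G.s f) p →
    G.GWalk p (G.s (p.head hne)) (G.r (p.getLast hne))
  | [e], _, _ => by simp [GWalk]
  | e :: f :: q, _, hc => by
    obtain ⟨hef, hc'⟩ := List.isChain_cons_cons.1 hc
    refine ⟨rfl, ?_⟩
    have := gwalk_of_chain' (f :: q) (by simp) hc'
    rw [List.head] at this
    rw [hef]
    simpa [List.getLast] using this

lemma gwalk_of_cycle {p : List Ed} (hc : G.IsCycle p) :
    ∃ (hne : p ≠ []), G.GWalk p (G.s (p.head hne)) (G.s (p.head hne)) := by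
  obtain ⟨hne, hch, hcl, _⟩ := hc
  refine ⟨hne, ?_⟩
  have := gwalk_of_chain' p hne hch
  rwa [hcl] at this

/-- From a walk whose sources repeat, extract a strictly shorter nonempty closed walk. -/
lemma closed_subwalk_of_dup : ∀ (p : List Ed) (v w : V), G.GWalk p v w →
    ¬(p.map G.s).Nodup →
    ∃ (q : List Ed) (u : V), q ≠ [] ∧ G.GWalk q u u ∧ q.length < p.length ∧
      ∀ e ∈ q, e ∈ p := by
  intro p
  induction p with
  | nil => intro v w _ hnd; simp at hnd
  | cons e p' ih =>
    intro v w hw hnd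
    obtain ⟨rfl, hw'⟩ := hw
    by_cases hmem : G.s e ∈ p'.map G.s
    · obtain ⟨f, hf, hsf⟩ := List.mem_map.1 hmem
      obtain ⟨l1, l2, rfl⟩ := List.append_of_mem hf
      obtain ⟨u, hu1, hu2⟩ := gwalk_append.1 hw'
      have hsu : G.s f = u := hu2.1
      refine ⟨e :: l1, G.s e, by simp, ⟨rfl, ?_⟩, by simp, ?_⟩
      · rw [← hsu, hsf] at hu1
        exact hu1
      · intro x hx
        rcases List.mem_cons.1 hx with h | h
        · simp [h]
        · simp [List.mem_append.2 (Or.inl h)]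
    · have hnd' : ¬(p'.map G.s).Nodup := by
        intro hn
        exact hnd (List.nodup_cons.2 ⟨hmem, hn⟩)
      obtain ⟨q, u, hq1, hq2, hq3, hq4⟩ := ih _ _ hw' hnd'
      exact ⟨q, u, hq1, hq2, Nat.lt_succ_of_lt hq3, fun x hx => List.mem_cons_of_mem _ (hq4 x hx)⟩

end Walks

end RFGraph
namespace RFGraph

section Cycles

variable {V Ed : Type} [DecidableEq V] {G : RFGraph V Ed}

/-- Any nonempty closed walk contains a genuine cycle. -/
lemma cycle_of_closed_walk : ∀ (n : ℕ) (p : List Ed) (u : V), p.length ≤ n → p ≠ [] →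
    G.GWalk p u u → ∃ q, G.IsCycle q ∧ ∀ e ∈ q, e ∈ p := by
  intro n
  induction n with
  | zero => intro p u hl hne _; cases p with
    | nil => exact absurd rfl hne
    | cons e p => simp at hl
  | succ n ih =>
    intro p u hl hne hw
    by_cases hnd : (p.map G.s).Nodup
    · refine ⟨p, ⟨hne, gwalk_chain' hw, ?_, hnd⟩, fun e he => he⟩
      rw [gwalk_getLast hw hne]
      cases p with
      | nil => exact absurd rfl hne
      | cons e p' => exact hw.1.symm
    · obtain ⟨q, u', hq1, hq2, hq3, hq4⟩ := closed_subwalk_of_dup p u u hw hnd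
      obtain ⟨c, hc1, hc2⟩ := ih q u' (by omega) hq1 hq2
      exact ⟨c, hc1, fun e he => hq4 e (hc2 e he)⟩

/-- The set of vertices lying on some cycle. -/
def CycV (G : RFGraph V Ed) : Set V := {v | ∃ p, G.IsCycle p ∧ ∃ f ∈ p, G.s f = v}

open scoped Classical in
/-- Canonical successor along the unique emitted edge (used for cycle vertices). -/
noncomputable def csucc (G : RFGraph V Ed) (v : V) : V :=
  if h : ∃ e, G.emit v = {e} then G.r h.choose else v

section NoExit

variable (hne : ¬ ∃ p : List Ed, G.IsCycle p ∧ G.HasExit p)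
include hne

lemma emit_of_cycv {v : V} (hv : v ∈ G.CycV) :
    ∃ e, G.emit v = {e} ∧ G.r e ∈ G.CycV := by
  obtain ⟨p, hp, f, hf, hsf⟩ := hv
  obtain ⟨hpne, hpch, hpcl, hpnd⟩ := id hp
  have hnoex : ∀ e : Ed, (∃ f ∈ p, G.s e = G.s f) → e ∈ p := by
    intro e hex
    by_contra hnot
    exact hne ⟨p, hp, e, hex, hnot⟩
  have hemit : G.emit v = {f} := by
    apply Finset.ext
    intro e
    simp only [Finset.mem_singleton]
    constructor
    · intro he
      have hse : G.s e = v := (G.mem_emit e v).1 he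
      have hep : e ∈ p := hnoex e ⟨f, hf, by rw [hse, hsf]⟩
      exact List.inj_on_of_nodup_map hpnd hep hf (by rw [hse, hsf])
    · rintro rfl
      exact (G.mem_emit _ v).2 hsf
  refine ⟨f, hemit, ?_⟩
  obtain ⟨hpne2, hw⟩ := gwalk_of_cycle hp
  have hrange : ∃ f' ∈ p, G.s f' = G.r f := by
    have key : ∀ (q : List Ed) (a b : V), G.GWalk q a b → f ∈ q →
        G.r f = b ∨ ∃ f' ∈ q, G.s f' = G.r f := by
      intro q
      induction q with
      | nil => intro a b _ hm; simp at hm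
      | cons e q' ihq =>
        intro a b hwq hm
        obtain ⟨rfl, hwq'⟩ := hwq
        rcases List.mem_cons.1 hm with rfl | hm'
        · cases q' with
          | nil => exact Or.inl hwq'
          | cons g q'' => exact Or.inr ⟨g, by simp, hwq'.1⟩
        · rcases ihq _ _ hwq' hm' with h | ⟨f', hf', hsf'⟩
          · exact Or.inl h
          · exact Or.inr ⟨f', List.mem_cons_of_mem _ hf', hsf'⟩
    rcases key p _ _ hw hf with h | h
    · cases p with
      | nil => exact absurd rfl hpne2
      | cons e p' => exact ⟨e, by simp, by rw [h]; rfl⟩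
    · exact h
  obtain ⟨f', hf', hsf'⟩ := hrange
  exact ⟨p, hp, f', hf', hsf'⟩

lemma cycv_step {v : V} (hv : v ∈ G.CycV) :
    G.csucc v ∈ G.CycV ∧ ∀ e ∈ G.emit v, G.r e = G.csucc v := by
  classical
  obtain ⟨e₀, he₀, hr₀⟩ := emit_of_cycv hne hv
  have hex : ∃ e, G.emit v = {e} := ⟨e₀, he₀⟩
  have hsing : ({e₀} : Finset Ed) = {hex.choose} := by
    rw [← he₀]; exact hex.choose_spec
  have hch : e₀ = hex.choose := Finset.singleton_injective hsing
  have hcs : G.csucc v = G.r e₀ := by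
    rw [csucc, dif_pos hex, ← hch]
  constructor
  · rw [hcs]; exact hr₀
  · intro e he
    rw [he₀, Finset.mem_singleton] at he
    rw [he, hcs]

lemma gwalk_cycv : ∀ (p : List Ed) (v w : V), G.GWalk p v w → v ∈ G.CycV → w ∈ G.CycV := by
  intro p
  induction p with
  | nil => intro v w h hv; cases h; exact hv
  | cons e p' ih =>
    intro v w h hv
    obtain ⟨rfl, h'⟩ := h
    have he : e ∈ G.emit (G.s e) := (G.mem_emit e _).2 rfl
    have hst := cycv_step hne hv
    have hre : G.r e ∈ G.CycV := by rw [hst.2 e he]; exact hst.1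
    exact ih _ _ h' hre

lemma gwalk_endpoint_cycv {p : List Ed} {v w : V} (hw : G.GWalk p v w)
    (h : ∃ e ∈ p, G.s e ∈ G.CycV) : w ∈ G.CycV := by
  obtain ⟨e, he, hse⟩ := h
  obtain ⟨l1, l2, rfl⟩ := List.append_of_mem he
  obtain ⟨u, _, hu2⟩ := gwalk_append.1 hw
  have : u ∈ G.CycV := by rw [← hu2.1]; exact hse
  exact gwalk_cycv hne _ _ _ hu2 this

/-- A walk longer than the number of available sources ends on a cycle vertex. -/
lemma long_walk_endpoint {p : List Ed} {v w : V} (S₀ : Finset V) (hw : G.GWalk p v w)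
    (hsrc : ∀ e ∈ p, G.s e ∈ S₀) (hlen : S₀.card < p.length) : w ∈ G.CycV := by
  have hnd : ¬ (p.map G.s).Nodup := by
    intro hnd
    have h1 : (p.map G.s).toFinset.card = (p.map G.s).length := List.toFinset_card_of_nodup hnd
    have h2 : (p.map G.s).toFinset ⊆ S₀ := by
      intro x hx
      rw [List.mem_toFinset] at hx
      obtain ⟨e, he, rfl⟩ := List.mem_map.1 hx
      exact hsrc e he
    have := Finset.card_le_card h2
    rw [h1, List.length_map] at this
    omega
  obtain ⟨q, u, hq1, hq2, hq3, hq4⟩ := closed_subwalk_of_dup p v w hw hnd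
  obtain ⟨c, hc1, hc2⟩ := cycle_of_closed_walk q.length q u le_rfl hq1 hq2
  have hcne : c ≠ [] := hc1.choose
  have hhead : G.s (c.head hcne) ∈ G.CycV := ⟨c, hc1, c.head hcne, List.head_mem hcne, rfl⟩
  have hheadp : c.head hcne ∈ p := hq4 _ (hc2 _ (List.head_mem hcne))
  exact gwalk_endpoint_cycv hne hw ⟨c.head hcne, hheadp, hhead⟩

end NoExit

end Cycles

end RFGraph
namespace RFGraph

section Rewriting

variable {V Ed : Type} [DecidableEq V] {G : RFGraph V Ed}

variable (G) in
/-- One-step rewriting with rewriting sites restricted to vertices satisfying `P`. -/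
def RStep (P : V → Prop) (a b : Multiset (V × ℤ)) : Prop :=
  ∃ (v : V) (i : ℤ), P v ∧ (v, i) ∈ a ∧ G.emit v ≠ ∅ ∧
    b = a.erase (v, i) + (G.emit v).val.map (fun e => (G.r e, i + 1))

variable (G) in
/-- Finitely many restricted rewriting steps. -/
def RSteps (P : V → Prop) : Multiset (V × ℤ) → Multiset (V × ℤ) → Prop :=
  Relation.ReflTransGen (G.RStep P)

lemma rstep_tstep {P a b} (h : G.RStep P a b) : G.TStep1 a b := by
  obtain ⟨v, i, _, h1, h2, h3⟩ := h
  exact ⟨v, i, h1, h2, h3⟩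

lemma tstep_rstep {a b} (h : G.TStep1 a b) : G.RStep (fun _ => True) a b := by
  obtain ⟨v, i, h1, h2, h3⟩ := h
  exact ⟨v, i, trivial, h1, h2, h3⟩

lemma rstep_mono {P Q : V → Prop} (hPQ : ∀ v, P v → Q v) {a b} (h : G.RStep P a b) :
    G.RStep Q a b := by
  obtain ⟨v, i, h0, h1, h2, h3⟩ := h
  exact ⟨v, i, hPQ v h0, h1, h2, h3⟩

lemma rsteps_mono {P Q : V → Prop} (hPQ : ∀ v, P v → Q v) {a b} (h : G.RSteps P a b) :
    G.RSteps Q a b :=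
  Relation.ReflTransGen.mono (p := G.RStep Q) (fun _ _ hs => rstep_mono hPQ hs) _ _ h

lemma rstep_add {P a b} (c : Multiset (V × ℤ)) (h : G.RStep P a b) :
    G.RStep P (a + c) (b + c) := by
  obtain ⟨v, i, h0, h1, h2, h3⟩ := h
  refine ⟨v, i, h0, Multiset.mem_add.2 (Or.inl h1), h2, ?_⟩
  rw [Multiset.erase_add_left_pos c h1, h3]
  rw [add_right_comm]

lemma rsteps_add {P a b} (c : Multiset (V × ℤ)) (h : G.RSteps P a b) :
    G.RSteps P (a + c) (b + c) := by
  induction h with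
  | refl => exact Relation.ReflTransGen.refl
  | tail _ hstep ih => exact ih.tail (rstep_add c hstep)

lemma rsteps_add_both {P a b c d} (h1 : G.RSteps P a b) (h2 : G.RSteps P c d) :
    G.RSteps P (a + c) (b + d) := by
  refine Relation.ReflTransGen.trans (rsteps_add c h1) ?_
  rw [add_comm b c, add_comm b d]
  exact rsteps_add b h2

lemma rstep_shift {P a b} (n : ℤ) (h : G.RStep P a b) :
    G.RStep P (shiftMul n a) (shiftMul n b) := by
  obtain ⟨v, i, h0, hv, hnemp, rfl⟩ := h
  refine ⟨v, i + n, h0, Multiset.mem_map.2 ⟨(v, i), hv, rfl⟩, hnemp, ?_⟩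
  show Multiset.map _ _ = _
  rw [Multiset.map_add]
  congr 1
  · exact (Multiset.map_erase _ (shift_inj (V := V) n) (v, i) a)
  · rw [Multiset.map_map]
    congr 1
    funext e
    simp only [Function.comp_apply]
    congr 1
    omega

lemma rsteps_shift {P a b} (n : ℤ) (h : G.RSteps P a b) :
    G.RSteps P (shiftMul n a) (shiftMul n b) := by
  induction h with
  | refl => exact Relation.ReflTransGen.refl
  | tail _ hstep ih => exact ih.tail (rstep_shift n hstep)

lemma shiftMul_shiftMul (n m : ℤ) (a : Multiset (V × ℤ)) :
    (shiftMul (V := V) n) (shiftMul m a) = shiftMul (m + n) a := by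
  show Multiset.map _ (Multiset.map _ _) = _
  rw [Multiset.map_map]
  congr 1
  funext p
  simp only [Function.comp_apply]
  congr 1
  omega

lemma shiftMul_zero (a : Multiset (V × ℤ)) : shiftMul (V := V) 0 a = a := by
  show Multiset.map _ _ = _
  have : (fun p : V × ℤ => (p.1, p.2 + (0:ℤ))) = id := by
    funext p; simp
  rw [this, Multiset.map_id]

lemma rstep_shift_rev {P : V → Prop} {a c} (n : ℤ) (h : G.RStep P (shiftMul n a) c) :
    ∃ b, c = shiftMul n b ∧ G.RStep P a b := by
  obtain ⟨v, i, h0, hv, hnemp, rfl⟩ := h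
  obtain ⟨⟨v', i'⟩, hv', heq⟩ := Multiset.mem_map.1 hv
  obtain ⟨rfl, hi⟩ : v' = v ∧ i' + n = i := by
    simpa [Prod.ext_iff] using heq
  refine ⟨a.erase (v', i') + (G.emit v').val.map (fun e => (G.r e, i' + 1)),
    ?_, ⟨v', i', h0, hv', hnemp, rfl⟩⟩
  show _ = Multiset.map _ _
  rw [Multiset.map_add]
  congr 1
  · rw [Multiset.map_erase _ (shift_inj (V := V) n) (v', i') a]
    show (shiftMul n a).erase (v', i) = _
    congr 1
    show (v', i) = (v', i' + n)
    rw [hi]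
  · rw [Multiset.map_map]
    congr 1
    funext e
    simp only [Function.comp_apply]
    show (G.r e, i + 1) = (G.r e, i' + 1 + n)
    rw [← hi]
    congr 1
    omega

lemma rsteps_shift_rev {P : V → Prop} {a c} (n : ℤ) (h : G.RSteps P (shiftMul n a) c) :
    ∃ b, c = shiftMul n b ∧ G.RSteps P a b := by
  generalize hsa : shiftMul n a = sa at h
  induction h generalizing a with
  | refl => exact ⟨a, hsa.symm, Relation.ReflTransGen.refl⟩
  | tail hprev hstep ih =>
    obtain ⟨b, rfl, hab⟩ := ih hsa
    obtain ⟨b', rfl, hbb'⟩ := rstep_shift_rev n hstep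
    exact ⟨b', rfl, hab.tail hbb'⟩

lemma rstep_ne_zero {P a b} (h : G.RStep P a b) : b ≠ 0 := by
  obtain ⟨v, i, _, _, hnemp, rfl⟩ := h
  intro hzero
  rcases add_eq_zero.1 hzero with ⟨-, hmap⟩
  rw [Multiset.map_eq_zero] at hmap
  exact hnemp (Finset.val_eq_zero.1 hmap)

lemma rsteps_ne_zero {P a b} (h : G.RSteps P a b) (ha : a ≠ 0) : b ≠ 0 := by
  induction h with
  | refl => exact ha
  | tail _ hstep _ => exact rstep_ne_zero hstep

lemma rstep_diamond {P : V → Prop} {a b c} (hb : G.RStep P a b) (hc : G.RStep P a c) :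
    b = c ∨ ∃ d, G.RStep P b d ∧ G.RStep P c d := by
  classical
  obtain ⟨v, i, hv0, hv1, hv2, rfl⟩ := hb
  obtain ⟨w, j, hw0, hw1, hw2, rfl⟩ := hc
  by_cases hpq : (v, i) = (w, j)
  · left
    obtain ⟨rfl, rfl⟩ : v = w ∧ i = j := by simpa [Prod.ext_iff] using hpq
    rfl
  · right
    set Rp := (G.emit v).val.map (fun e => (G.r e, i + 1)) with hRp
    set Rq := (G.emit w).val.map (fun e => (G.r e, j + 1)) with hRq
    refine ⟨(a.erase (v, i)).erase (w, j) + Rp + Rq, ⟨w, j, hw0, ?_, hw2, ?_⟩,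
      ⟨v, i, hv0, ?_, hv2, ?_⟩⟩
    · exact Multiset.mem_add.2 (Or.inl ((Multiset.mem_erase_of_ne (Ne.symm hpq)).2 hw1))
    · rw [Multiset.erase_add_left_pos Rp ((Multiset.mem_erase_of_ne (Ne.symm hpq)).2 hw1)]
    · exact Multiset.mem_add.2 (Or.inl ((Multiset.mem_erase_of_ne hpq).2 hv1))
    · rw [Multiset.erase_add_left_pos Rq ((Multiset.mem_erase_of_ne hpq).2 hv1)]
      rw [Multiset.erase_comm, add_right_comm]

variable (G) in
/-- Joinability with respect to restricted rewriting. -/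
def RJoin (P : V → Prop) (a b : Multiset (V × ℤ)) : Prop :=
  Relation.Join (G.RSteps P) a b

lemma rjoin_cr {P : V → Prop} :
    ∀ a b c : Multiset (V × ℤ), G.RStep P a b → G.RStep P a c →
      ∃ d, Relation.ReflGen (G.RStep P) b d ∧ Relation.ReflTransGen (G.RStep P) c d := by
  intro a b c hb hc
  rcases rstep_diamond hb hc with rfl | ⟨d, hbd, hcd⟩
  · exact ⟨b, Relation.ReflGen.refl, Relation.ReflTransGen.refl⟩
  · exact ⟨d, Relation.ReflGen.single hbd, Relation.ReflTransGen.single hcd⟩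

lemma rjoin_of_rsteps {P a b} (h : G.RSteps P a b) : G.RJoin P a b :=
  ⟨b, h, Relation.ReflTransGen.refl⟩

lemma rjoin_refl {P} (a : Multiset (V × ℤ)) : G.RJoin P a a :=
  rjoin_of_rsteps Relation.ReflTransGen.refl

lemma rjoin_symm {P a b} (h : G.RJoin P a b) : G.RJoin P b a :=
  Relation.symmetric_join.symm _ _ h

lemma rjoin_trans {P a b c} (h1 : G.RJoin P a b) (h2 : G.RJoin P b c) : G.RJoin P a c := by
  obtain ⟨u, hau, hbu⟩ := h1
  obtain ⟨w, hbw, hcw⟩ := h2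
  obtain ⟨d, hud, hwd⟩ := Relation.church_rosser (rjoin_cr (P := P)) hbu hbw
  exact ⟨d, hau.trans hud, hcw.trans hwd⟩

lemma rjoin_add {P a b c d} (h1 : G.RJoin P a b) (h2 : G.RJoin P c d) :
    G.RJoin P (a + c) (b + d) := by
  obtain ⟨u, hau, hbu⟩ := h1
  obtain ⟨w, hcw, hdw⟩ := h2
  exact ⟨u + w, rsteps_add_both hau hcw, rsteps_add_both hbu hdw⟩

lemma rjoin_shift {P a b} (n : ℤ) (h : G.RJoin P a b) :
    G.RJoin P (shiftMul n a) (shiftMul n b) := by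
  obtain ⟨u, hau, hbu⟩ := h
  exact ⟨shiftMul n u, rsteps_shift n hau, rsteps_shift n hbu⟩

lemma rstep_add_split {P : V → Prop} {a b c : Multiset (V × ℤ)} (h : G.RStep P (a + b) c) :
    (∃ a', G.RStep P a a' ∧ c = a' + b) ∨ (∃ b', G.RStep P b b' ∧ c = a + b') := by
  obtain ⟨v, i, h0, h1, h2, rfl⟩ := h
  rcases Multiset.mem_add.1 h1 with hm | hm
  · refine Or.inl ⟨a.erase (v, i) + (G.emit v).val.map (fun e => (G.r e, i + 1)),
      ⟨v, i, h0, hm, h2, rfl⟩, ?_⟩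
    rw [Multiset.erase_add_left_pos b hm, add_right_comm]
  · refine Or.inr ⟨b.erase (v, i) + (G.emit v).val.map (fun e => (G.r e, i + 1)),
      ⟨v, i, h0, hm, h2, rfl⟩, ?_⟩
    rw [Multiset.erase_add_right_pos a hm, add_assoc]

lemma rsteps_add_split {P : V → Prop} {a b c : Multiset (V × ℤ)} (h : G.RSteps P (a + b) c) :
    ∃ ca cb, c = ca + cb ∧ G.RSteps P a ca ∧ G.RSteps P b cb := by
  generalize hab : a + b = ab at h
  induction h generalizing a b with
  | refl => exact ⟨a, b, hab.symm, Relation.ReflTransGen.refl, Relation.ReflTransGen.refl⟩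
  | tail hprev hstep ih =>
    obtain ⟨ca, cb, rfl, hca, hcb⟩ := ih hab
    rcases rstep_add_split hstep with ⟨a', ha', rfl⟩ | ⟨b', hb', rfl⟩
    · exact ⟨a', cb, rfl, hca.tail ha', hcb⟩
    · exact ⟨ca, b', rfl, hca, hcb.tail hb'⟩

/-- Genealogy: every element of a reduct has an ancestor with a connecting walk
    whose sources are rewriting sites. -/
lemma rsteps_ancestor {P : V → Prop} {u u' : Multiset (V × ℤ)} (h : G.RSteps P u u') :
    ∀ w t, (w, t) ∈ u' → ∃ (v : V) (i : ℤ) (p : List Ed), (v, i) ∈ u ∧ G.GWalk p v w ∧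
      i + (p.length : ℤ) = t ∧ ∀ e ∈ p, P (G.s e) := by
  induction h with
  | refl =>
    intro w t hw
    exact ⟨w, t, [], hw, rfl, by simp, by simp⟩
  | tail hprev hstep ih =>
    intro w t hw
    obtain ⟨v₀, i₀, h0, h1, h2, rfl⟩ := hstep
    rcases Multiset.mem_add.1 hw with hm | hm
    · exact ih w t (Multiset.mem_of_mem_erase hm)
    · obtain ⟨e, he, heq⟩ := Multiset.mem_map.1 hm
      obtain ⟨hre, hit⟩ : G.r e = w ∧ i₀ + 1 = t := by simpa [Prod.ext_iff] using heq
      obtain ⟨v, i, p, hmem, hwalk, hlen, hsrc⟩ := ih v₀ i₀ h1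
      refine ⟨v, i, p ++ [e], hmem, ?_, ?_, ?_⟩
      · refine gwalk_append.2 ⟨v₀, hwalk, ?_⟩
        rw [← hre]
        exact gwalk_singleton.2 ⟨(G.mem_emit e v₀).1 he, rfl⟩
      · simp only [List.length_append, List.length_singleton]
        push_cast
        omega
      · intro f hf
        rcases List.mem_append.1 hf with hf | hf
        · exact hsrc f hf
        · rw [List.mem_singleton.1 hf, (G.mem_emit e v₀).1 he]
          exact h0

end Rewriting

end RFGraph
namespace RFGraph

section Congruence

variable {V Ed : Type} [DecidableEq V] {G : RFGraph V Ed}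

lemma tcon_rjoin {a b : Multiset (V × ℤ)} (h : G.tcon a b) : G.RJoin (fun _ => True) a b := by
  have hle : addConGen G.TStep1 ≤
      { r := fun a b => G.RJoin (fun _ => True) a b
        iseqv := ⟨fun a => rjoin_refl a, fun h => rjoin_symm h, fun h1 h2 => rjoin_trans h1 h2⟩
        add' := fun h1 h2 => rjoin_add h1 h2 } := by
    refine AddCon.addConGen_le.2 fun x y hxy => ?_
    exact rjoin_of_rsteps (Relation.ReflTransGen.single (tstep_rstep hxy))
  exact hle h

lemma rsteps_tcon {P : V → Prop} {a b : Multiset (V × ℤ)} (h : G.RSteps P a b) : G.tcon a b := by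
  induction h with
  | refl => exact G.tcon.refl a
  | tail _ hstep ih => exact G.tcon.trans ih (AddConGen.Rel.of _ _ (rstep_tstep hstep))

lemma tcon_zero {y : Multiset (V × ℤ)} (h : G.tcon y 0) : y = 0 := by
  have hle : addConGen G.TStep1 ≤
      { r := fun a b => (a = 0 ↔ b = 0)
        iseqv := ⟨fun _ => Iff.rfl, fun h => h.symm, fun h1 h2 => h1.trans h2⟩
        add' := fun h1 h2 => by
          constructor
          · intro h
            rcases add_eq_zero.1 h with ⟨ha, hb⟩
            rw [add_eq_zero]
            exact ⟨h1.1 ha, h2.1 hb⟩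
          · intro h
            rcases add_eq_zero.1 h with ⟨ha, hb⟩
            rw [add_eq_zero]
            exact ⟨h1.2 ha, h2.2 hb⟩ } := by
    refine AddCon.addConGen_le.2 fun x y hxy => ?_
    obtain ⟨v, i, h1, h2, h3⟩ := hxy
    have hx : x ≠ 0 := by
      intro hx0
      rw [hx0] at h1
      simp at h1
    have hy : y ≠ 0 := rstep_ne_zero (tstep_rstep ⟨v, i, h1, h2, h3⟩)
    exact iff_of_false hx hy
  exact (hle h).2 rfl

lemma rsteps_finite_sites {a b : Multiset (V × ℤ)} (h : G.RSteps (fun _ => True) a b) :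
    ∃ S : Finset V, G.RSteps (fun v => v ∈ S) a b := by
  induction h with
  | refl => exact ⟨∅, Relation.ReflTransGen.refl⟩
  | tail _ hstep ih =>
    obtain ⟨S, hS⟩ := ih
    obtain ⟨v, i, -, h1, h2, h3⟩ := hstep
    refine ⟨insert v S, Relation.ReflTransGen.tail
      (rsteps_mono (fun w hw => Finset.mem_insert_of_mem hw) hS)
      ⟨v, i, Finset.mem_insert_self v S, h1, h2, h3⟩⟩

lemma tshift_mk (n : ℤ) (u : Multiset (V × ℤ)) :
    G.tshift n (G.tcon.mk' u) = G.tcon.mk' (shiftMul n u) := rfl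

lemma mk'_eq_iff {u w : Multiset (V × ℤ)} :
    G.tcon.mk' u = G.tcon.mk' w ↔ G.tcon u w := AddCon.eq _

end Congruence

section Forward

variable {V Ed : Type} [DecidableEq V]

open scoped Classical

/-- The extra elements produced when rewriting along a walk. -/
noncomputable def junk (G : RFGraph V Ed) : List Ed → ℤ → Multiset (V × ℤ)
  | [], _ => 0
  | e :: p, t => ((G.emit (G.s e)).val.erase e).map (fun e' => (G.r e', t + 1)) + G.junk p (t + 1)

variable {G : RFGraph V Ed}

lemma walk_steps : ∀ (p : List Ed) (v w : V) (t : ℤ), G.GWalk p v w →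
    G.RSteps (fun _ => True) {(v, t)} ({(w, t + (p.length : ℤ))} + G.junk p t) := by
  classical
  intro p
  induction p with
  | nil =>
    intro v w t hw
    cases hw
    simp only [junk, List.length_nil, Nat.cast_zero, add_zero]
    exact Relation.ReflTransGen.refl
  | cons e p' ih =>
    intro v w t hw
    obtain ⟨rfl, hw'⟩ := hw
    have he : e ∈ G.emit (G.s e) := (G.mem_emit e _).2 rfl
    have hnemp : G.emit (G.s e) ≠ ∅ := Finset.ne_empty_of_mem he
    have hstep : G.RStep (fun _ => True) {(G.s e, t)}
        ((G.emit (G.s e)).val.map (fun f => (G.r f, t + 1))) := by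
      refine ⟨G.s e, t, trivial, by simp, hnemp, ?_⟩
      rw [Multiset.erase_singleton]
      rw [zero_add]
    have hsplit : (G.emit (G.s e)).val.map (fun f => (G.r f, t + 1)) =
        {(G.r e, t + 1)} + ((G.emit (G.s e)).val.erase e).map (fun f => (G.r f, t + 1)) := by
      have hval : (G.emit (G.s e)).val = e ::ₘ (G.emit (G.s e)).val.erase e :=
        (Multiset.cons_erase he).symm
      conv_lhs => rw [hval]
      rw [Multiset.map_cons]
      rfl
    have hrest := ih (G.r e) w (t + 1) hw'
    have hrest2 := rsteps_add (((G.emit (G.s e)).val.erase e).map (fun f => (G.r f, t + 1))) hrest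
    refine Relation.ReflTransGen.head hstep ?_
    rw [hsplit]
    have hgoal : ({(w, t + ((e :: p').length : ℤ))} + G.junk (e :: p') t) =
        ({(w, t + 1 + (p'.length : ℤ))} + G.junk p' (t + 1)) +
          ((G.emit (G.s e)).val.erase e).map (fun f => (G.r f, t + 1)) := by
      show _ = _
      rw [junk]
      have : t + ((e :: p').length : ℤ) = t + 1 + (p'.length : ℤ) := by
        simp only [List.length_cons]
        push_cast
        ring
      rw [this]
      abel
    rw [hgoal]
    exact hrest2

lemma junk_ne_zero : ∀ (p : List Ed) (t : ℤ) (f₀ e₀ : Ed), f₀ ∈ p → G.s e₀ = G.s f₀ →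
    e₀ ≠ f₀ → G.junk p t ≠ 0 := by
  classical
  intro p
  induction p with
  | nil => intro t f₀ e₀ hf _ _; simp at hf
  | cons f p' ih =>
    intro t f₀ e₀ hf hse hne
    rw [junk]
    intro hzero
    rcases add_eq_zero.1 hzero with ⟨h1, h2⟩
    rcases List.mem_cons.1 hf with rfl | hf'
    · rw [Multiset.map_eq_zero] at h1
      have : e₀ ∈ (G.emit (G.s f₀)).val.erase f₀ := by
        rw [Multiset.mem_erase_of_ne hne]
        exact (G.mem_emit e₀ _).2 hse
      rw [h1] at this
      simp at this
    · exact ih (t + 1) f₀ e₀ hf' hse hne h2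

lemma forward_direction (h : ∃ p : List Ed, G.IsCycle p ∧ G.HasExit p) :
    ∃ (a : G.TM) (n : ℤ) (x : G.TM), n < 0 ∧ x ≠ 0 ∧ G.tshift n a = a + x := by
  obtain ⟨p, hcyc, e₀, ⟨f₀, hf₀, hse⟩, he₀p⟩ := h
  obtain ⟨hpne, hw⟩ := gwalk_of_cycle hcyc
  set v := G.s (p.head hpne) with hv
  have hk : 1 ≤ p.length := by
    cases p with
    | nil => exact absurd rfl hpne
    | cons e q => simp
  set k : ℤ := (p.length : ℤ) with hkdef
  have hsteps := walk_steps p v v 0 hw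
  rw [zero_add] at hsteps
  have hconn : G.tcon {(v, 0)} ({(v, k)} + G.junk p 0) := by
    have := rsteps_tcon hsteps
    exact this
  refine ⟨G.tcon.mk' {(v, k)}, -k, G.tcon.mk' (G.junk p 0), by omega, ?_, ?_⟩
  · intro hx0
    have : G.tcon (G.junk p 0) 0 := by
      rw [show (0 : G.TM) = G.tcon.mk' 0 from (map_zero _).symm] at hx0
      exact mk'_eq_iff.1 hx0
    have hj0 := tcon_zero this
    exact junk_ne_zero p 0 f₀ e₀ hf₀ hse (fun hcon => he₀p (hcon ▸ hf₀)) hj0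
  · rw [tshift_mk]
    have hshift : shiftMul (-k) ({((v : V), k)} : Multiset (V × ℤ)) = {(v, 0)} := by
      show Multiset.map (fun q : V × ℤ => (q.1, q.2 + (-k))) {(v, k)} = {(v, 0)}
      rw [Multiset.map_singleton]
      simp
    rw [hshift]
    exact (mk'_eq_iff.2 hconn).trans (map_add G.tcon.mk' _ _)

end Forward

end RFGraph
namespace RFGraph

section Potential

variable {V Ed : Type} [DecidableEq V]

open scoped Classical

/-- Off-cycle edge relation within a finite set of sites. -/
def OffRel (G : RFGraph V Ed) (S₀ : Finset V) (u w : V) : Prop :=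
  u ∈ S₀ ∧ u ∉ G.CycV ∧ w ∈ S₀ ∧ w ∉ G.CycV ∧ ∃ e ∈ G.emit u, G.r e = w

/-- Vertices reachable through off-cycle edges. -/
def OffReach (G : RFGraph V Ed) (S₀ : Finset V) (u : V) : Set V :=
  {w | Relation.ReflTransGen (G.OffRel S₀) u w}

noncomputable def offRank (G : RFGraph V Ed) (S₀ : Finset V) (u : V) : ℕ :=
  (G.OffReach S₀ u).ncard

variable {G : RFGraph V Ed} {S₀ : Finset V}

lemma offrel_gwalk {u w : V} (h : Relation.ReflTransGen (G.OffRel S₀) u w) :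
    ∃ p : List Ed, G.GWalk p u w ∧ ∀ e ∈ p, G.s e ∉ G.CycV := by
  induction h with
  | refl => exact ⟨[], rfl, by simp⟩
  | tail hprev hstep ih =>
    obtain ⟨p, hp, hsrc⟩ := ih
    obtain ⟨hu1, hu2, _, _, e, he, hre⟩ := hstep
    refine ⟨p ++ [e], gwalk_append.2 ⟨_, hp, ?_⟩, ?_⟩
    · exact gwalk_singleton.2 ⟨(G.mem_emit e _).1 he, hre⟩
    · intro f hf
      rcases List.mem_append.1 hf with hf | hf
      · exact hsrc f hf
      · rw [List.mem_singleton.1 hf, (G.mem_emit e _).1 he]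
        exact hu2

lemma offreach_subset {u : V} (hu : u ∈ S₀) : G.OffReach S₀ u ⊆ ↑S₀ := by
  intro w hw
  induction hw with
  | refl => exact hu
  | tail _ hstep _ => exact hstep.2.2.1

lemma offreach_finite {u : V} (hu : u ∈ S₀) : (G.OffReach S₀ u).Finite :=
  Set.Finite.subset (S₀.finite_toSet) (offreach_subset hu)

lemma offrank_le {u : V} (hu : u ∈ S₀) : G.offRank S₀ u ≤ S₀.card := by
  have := Set.ncard_le_ncard (offreach_subset (G := G) hu) S₀.finite_toSet
  rwa [Set.ncard_coe_finset] at this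

lemma offrank_pos {u : V} (hu : u ∈ S₀) : 0 < G.offRank S₀ u := by
  rw [offRank, Set.ncard_pos (offreach_finite hu)]
  exact ⟨u, Relation.ReflTransGen.refl⟩

lemma offrank_lt (hne : ¬ ∃ p : List Ed, G.IsCycle p ∧ G.HasExit p)
    {u w : V} (h : G.OffRel S₀ u w) : G.offRank S₀ w < G.offRank S₀ u := by
  obtain ⟨hu1, hu2, hw1, hw2, e, he, hre⟩ := h
  have hsub : G.OffReach S₀ w ⊆ G.OffReach S₀ u := by
    intro z hz
    exact Relation.ReflTransGen.head ⟨hu1, hu2, hw1, hw2, e, he, hre⟩ hz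
  have hnotin : u ∉ G.OffReach S₀ w := by
    intro hwu
    obtain ⟨p, hp, hsrc⟩ := offrel_gwalk hwu
    have hwalk : G.GWalk (e :: p) u u := by
      refine ⟨(G.mem_emit e _).1 he, ?_⟩
      rw [hre]
      exact hp
    obtain ⟨c, hc, hcsub⟩ := cycle_of_closed_walk (e :: p).length (e :: p) u le_rfl (by simp) hwalk
    have hcne : c ≠ [] := hc.choose
    have hhead : G.s (c.head hcne) ∈ G.CycV := ⟨c, hc, c.head hcne, List.head_mem hcne, rfl⟩
    have : c.head hcne ∈ e :: p := hcsub _ (List.head_mem hcne)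
    rcases List.mem_cons.1 this with heq | hmem
    · rw [heq] at hhead
      rw [(G.mem_emit e _).1 he] at hhead
      exact hu2 hhead
    · exact hsrc _ hmem hhead
  exact Set.ncard_lt_ncard ⟨hsub, fun hsup => hnotin (hsup Relation.ReflTransGen.refl)⟩
    (offreach_finite hu1)

/-- Iterates converging to the arrival-count potential. -/
noncomputable def potF (G : RFGraph V Ed) (S₀ : Finset V) : ℕ → V → ℕ
  | 0, _ => 0
  | (k+1), v => ((G.emit v).val.map (fun e =>
      (if G.r e ∈ G.CycV then 1 else 0) +
      (if G.r e ∈ S₀ ∧ G.r e ∉ G.CycV then potF G S₀ k (G.r e) else 0))).sum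

lemma potF_stab (hne : ¬ ∃ p : List Ed, G.IsCycle p ∧ G.HasExit p) :
    ∀ (k : ℕ) (v : V), v ∈ S₀ → v ∉ G.CycV → G.offRank S₀ v ≤ k →
      G.potF S₀ k v = G.potF S₀ (k + 1) v := by
  intro k
  induction k with
  | zero =>
    intro v hv1 hv2 hrank
    exact absurd hrank (by have := offrank_pos (G := G) hv1; omega)
  | succ k ih =>
    intro v hv1 hv2 hrank
    show G.potF S₀ (k+1) v = G.potF S₀ (k+2) v
    rw [potF, potF]
    congr 1
    apply Multiset.map_congr rfl
    intro e he
    congr 1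
    by_cases hg : G.r e ∈ S₀ ∧ G.r e ∉ G.CycV
    · rw [if_pos hg, if_pos hg]
      have hrel : G.OffRel S₀ v (G.r e) := ⟨hv1, hv2, hg.1, hg.2, e, Finset.mem_def.2 he, rfl⟩
      have := offrank_lt hne hrel
      exact ih (G.r e) hg.1 hg.2 (by omega)
    · rw [if_neg hg, if_neg hg]

/-- The arrival-count potential for off-cycle site vertices. -/
noncomputable def potA (G : RFGraph V Ed) (S₀ : Finset V) (v : V) : ℕ :=
  G.potF S₀ (S₀.card + 1) v

lemma potA_rec (hne : ¬ ∃ p : List Ed, G.IsCycle p ∧ G.HasExit p)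
    {v : V} (hv1 : v ∈ S₀) (hv2 : v ∉ G.CycV) :
    G.potA S₀ v = ((G.emit v).val.map (fun e =>
      (if G.r e ∈ G.CycV then 1 else 0) +
      (if G.r e ∈ S₀ ∧ G.r e ∉ G.CycV then G.potA S₀ (G.r e) else 0))).sum := by
  rw [potA, potF]
  congr 1
  apply Multiset.map_congr rfl
  intro e he
  congr 1
  by_cases hg : G.r e ∈ S₀ ∧ G.r e ∉ G.CycV
  · rw [if_pos hg, if_pos hg]
    exact potF_stab hne _ _ hg.1 hg.2 (offrank_le hg.1)
  · rw [if_neg hg, if_neg hg]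

/-- Weight of a single vertex. -/
noncomputable def pvert (G : RFGraph V Ed) (S₀ : Finset V) (w : V) : ℕ :=
  (if w ∈ G.CycV then 1 else 0) + (if w ∈ S₀ ∧ w ∉ G.CycV then G.potA S₀ w else 0)

/-- The invariant potential of a configuration. -/
noncomputable def pot (G : RFGraph V Ed) (S₀ : Finset V) (m : Multiset (V × ℤ)) : ℕ :=
  (m.map (fun q => G.pvert S₀ q.1)).sum

/-- The number of elements sitting on cycle vertices. -/
noncomputable def cycCount (G : RFGraph V Ed) (m : Multiset (V × ℤ)) : ℕ :=
  (m.map (fun q => if q.1 ∈ G.CycV then 1 else 0)).sum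

lemma pot_add (m m' : Multiset (V × ℤ)) : G.pot S₀ (m + m') = G.pot S₀ m + G.pot S₀ m' := by
  rw [pot, Multiset.map_add, Multiset.sum_add]
  rfl

lemma cycCount_add (m m' : Multiset (V × ℤ)) :
    G.cycCount (m + m') = G.cycCount m + G.cycCount m' := by
  rw [cycCount, Multiset.map_add, Multiset.sum_add]
  rfl

lemma cycCount_shift (n : ℤ) (m : Multiset (V × ℤ)) :
    G.cycCount (shiftMul n m) = G.cycCount m := by
  show ((Multiset.map _ m).map _).sum = _
  rw [Multiset.map_map]
  rfl

lemma cycCount_le_pot (m : Multiset (V × ℤ)) : G.cycCount m ≤ G.pot S₀ m := by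
  refine Multiset.sum_map_le_sum_map _ _ (fun q hq => ?_)
  rw [pvert]
  omega

lemma cycCount_pos {m : Multiset (V × ℤ)} {w : V} {t : ℤ} (hm : (w, t) ∈ m)
    (hw : w ∈ G.CycV) : 1 ≤ G.cycCount m := by
  rw [← Multiset.cons_erase hm, cycCount, Multiset.map_cons, Multiset.sum_cons]
  simp only [hw, if_pos]
  omega

lemma pot_step (hne : ¬ ∃ p : List Ed, G.IsCycle p ∧ G.HasExit p)
    {m m' : Multiset (V × ℤ)} (h : G.RStep (fun v => v ∈ S₀) m m') :
    G.pot S₀ m' = G.pot S₀ m := by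
  obtain ⟨v, i, hv, hmem, hnemp, rfl⟩ := h
  rw [pot_add]
  have hm : m = (v, i) ::ₘ m.erase (v, i) := (Multiset.cons_erase hmem).symm
  conv_rhs => rw [hm, pot, Multiset.map_cons, Multiset.sum_cons]
  have hkey : G.pot S₀ ((G.emit v).val.map (fun e => (G.r e, i + 1))) = G.pvert S₀ v := by
    rw [pot, Multiset.map_map]
    by_cases hvc : v ∈ G.CycV
    · obtain ⟨e₀, he₀, hre₀⟩ := emit_of_cycv hne hvc
      have hst := cycv_step hne hvc
      rw [he₀, Finset.singleton_val, Multiset.map_singleton, Multiset.sum_singleton]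
      show G.pvert S₀ (G.r e₀) = G.pvert S₀ v
      simp only [pvert]
      rw [if_pos hre₀, if_pos hvc]
      rw [if_neg (fun hc : G.r e₀ ∈ S₀ ∧ G.r e₀ ∉ G.CycV => hc.2 hre₀),
        if_neg (fun hc : v ∈ S₀ ∧ v ∉ G.CycV => hc.2 hvc)]
    · have hrec := potA_rec hne hv hvc
      show _ = G.pvert S₀ v
      simp only [pvert]
      rw [if_neg hvc, if_pos ⟨hv, hvc⟩, zero_add, hrec]
      rfl
  rw [hkey]
  rw [add_comm]
  rfl

lemma pot_steps (hne : ¬ ∃ p : List Ed, G.IsCycle p ∧ G.HasExit p)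
    {m m' : Multiset (V × ℤ)} (h : G.RSteps (fun v => v ∈ S₀) m m') :
    G.pot S₀ m' = G.pot S₀ m := by
  induction h with
  | refl => rfl
  | tail _ hstep ih => rw [pot_step hne hstep, ih]

end Potential

end RFGraph
namespace RFGraph

section Backward

variable {V Ed : Type} [DecidableEq V] {G : RFGraph V Ed}

lemma exists_level_ub (s : Multiset (V × ℤ)) : ∃ M : ℤ, ∀ q ∈ s, q.2 ≤ M := by
  induction s using Multiset.induction_on with
  | empty => exact ⟨0, by simp⟩
  | cons q s ih =>
    obtain ⟨M, hM⟩ := ih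
    refine ⟨max q.2 M, ?_⟩
    intro p hp
    rcases Multiset.mem_cons.1 hp with rfl | hp
    · exact le_max_left _ _
    · exact le_trans (hM p hp) (le_max_right _ _)

lemma exists_level_lb (s : Multiset (V × ℤ)) : ∃ M : ℤ, ∀ q ∈ s, M ≤ q.2 := by
  induction s using Multiset.induction_on with
  | empty => exact ⟨0, by simp⟩
  | cons q s ih =>
    obtain ⟨M, hM⟩ := ih
    refine ⟨min q.2 M, ?_⟩
    intro p hp
    rcases Multiset.mem_cons.1 hp with rfl | hp
    · exact min_le_left _ _
    · exact le_trans (min_le_right _ _) (hM p hp)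

lemma cycCount_mono {u v : Multiset (V × ℤ)} (h : u ≤ v) : G.cycCount u ≤ G.cycCount v := by
  obtain ⟨w, rfl⟩ := Multiset.le_iff_exists_add.1 h
  rw [cycCount_add]
  omega

lemma cycCount_finsum_ge {s : Finset ℕ} {f : ℕ → Multiset (V × ℤ)}
    (h : ∀ j ∈ s, 1 ≤ G.cycCount (f j)) : s.card ≤ G.cycCount (s.sum f) := by
  classical
  induction s using Finset.induction_on with
  | empty => simp
  | @insert j s hnotin ih =>
    rw [Finset.sum_insert hnotin, Finset.card_insert_of_notMem hnotin, cycCount_add]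
    have h1 := h j (Finset.mem_insert_self j s)
    have h2 := ih (fun i hi => h i (Finset.mem_insert_of_mem hi))
    have h3 : G.cycCount (∑ x ∈ s, f x) = G.cycCount (s.sum f) := rfl
    omega

lemma backward_direction (hne : ¬ ∃ p : List Ed, G.IsCycle p ∧ G.HasExit p) :
    ¬ ∃ (a : G.TM) (n : ℤ) (x : G.TM), n < 0 ∧ x ≠ 0 ∧ G.tshift n a = a + x := by
  rintro ⟨a', n, x', hn, hx', heq⟩
  obtain ⟨a, rfl⟩ := AddCon.mk'_surjective a'
  obtain ⟨x, rfl⟩ := AddCon.mk'_surjective x'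
  have hxne : x ≠ 0 := fun h => hx' (by rw [h, map_zero]; rfl)
  have hcon : G.tcon (shiftMul n a) (a + x) := by
    rw [tshift_mk] at heq
    exact mk'_eq_iff.1 (heq.trans (map_add G.tcon.mk' a x).symm)
  obtain ⟨c0, h1, h2⟩ := tcon_rjoin hcon
  obtain ⟨S1, hS1⟩ := rsteps_finite_sites h1
  obtain ⟨S2, hS2⟩ := rsteps_finite_sites h2
  set S₀ : Finset V := S1 ∪ S2 with hS₀
  have hJ : G.RJoin (fun v => v ∈ S₀) (shiftMul n a) (a + x) :=
    ⟨c0, rsteps_mono (fun v hv => Finset.mem_union_left _ hv) hS1,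
      rsteps_mono (fun v hv => Finset.mem_union_right _ hv) hS2⟩
  set m : ℤ := -n with hmdef
  have hm1 : 1 ≤ m := by omega
  have hbase : G.RJoin (fun v => v ∈ S₀) a (shiftMul m a + shiftMul m x) := by
    have h := rjoin_shift m hJ
    rw [shiftMul_shiftMul, show n + m = 0 by omega, shiftMul_zero] at h
    rwa [map_add] at h
  -- the iterated decomposition
  have main : ∀ K : ℕ, ∃ (d g : Multiset (V × ℤ)) (ξ : ℕ → Multiset (V × ℤ)),
      G.RSteps (fun v => v ∈ S₀) a d ∧ G.RSteps (fun v => v ∈ S₀) a g ∧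
      (∀ j ∈ Finset.Icc 1 K, G.RSteps (fun v => v ∈ S₀) x (ξ j)) ∧
      d = shiftMul ((K : ℤ) * m) g +
        (Finset.Icc 1 K).sum (fun j => shiftMul ((j : ℤ) * m) (ξ j)) := by
    intro K
    induction K with
    | zero =>
      refine ⟨a, a, fun _ => 0, Relation.ReflTransGen.refl, Relation.ReflTransGen.refl,
        by simp, ?_⟩
      simp [shiftMul_zero]
    | succ K ih =>
      obtain ⟨d, g, ξ, had, hag, hξ, hdec⟩ := ih
      have hjg : G.RJoin (fun v => v ∈ S₀) g (shiftMul m a + shiftMul m x) :=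
        rjoin_trans (rjoin_symm (rjoin_of_rsteps hag)) hbase
      obtain ⟨e, hge, hse⟩ := hjg
      obtain ⟨ca, cx, rfl, hca, hcx⟩ := rsteps_add_split hse
      obtain ⟨a1, rfl, haa1⟩ := rsteps_shift_rev m hca
      obtain ⟨x1, rfl, hxx1⟩ := rsteps_shift_rev m hcx
      refine ⟨shiftMul (((K : ℤ) + 1) * m) a1 +
          ((Finset.Icc 1 K).sum (fun j => shiftMul ((j : ℤ) * m) (ξ j)) +
            shiftMul (((K : ℤ) + 1) * m) x1),
        a1, Function.update ξ (K + 1) x1, ?_, haa1, ?_, ?_⟩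
      · -- a →* the new d
        have hstep1 : G.RSteps (fun v => v ∈ S₀)
            (shiftMul ((K : ℤ) * m) g)
            (shiftMul ((K : ℤ) * m) (shiftMul m a1 + shiftMul m x1)) :=
          rsteps_shift _ hge
        have hstep2 := rsteps_add
          ((Finset.Icc 1 K).sum (fun j => shiftMul ((j : ℤ) * m) (ξ j))) hstep1
        rw [← hdec] at hstep2
        have heq2 : shiftMul ((K : ℤ) * m) (shiftMul m a1 + shiftMul m x1) +
            (Finset.Icc 1 K).sum (fun j => shiftMul ((j : ℤ) * m) (ξ j)) =
            shiftMul (((K : ℤ) + 1) * m) a1 +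
              ((Finset.Icc 1 K).sum (fun j => shiftMul ((j : ℤ) * m) (ξ j)) +
                shiftMul (((K : ℤ) + 1) * m) x1) := by
          rw [map_add (shiftMul ((K : ℤ) * m)), shiftMul_shiftMul, shiftMul_shiftMul]
          rw [show m + (K : ℤ) * m = ((K : ℤ) + 1) * m by ring]
          abel
        rw [heq2] at hstep2
        exact Relation.ReflTransGen.trans had hstep2
      · -- property of updated ξ
        intro j hj
        rcases Finset.mem_Icc.1 hj with ⟨hj1, hj2⟩
        by_cases hjk : j = K + 1
        · rw [hjk, Function.update_self]
          exact hxx1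
        · rw [Function.update_of_ne hjk]
          exact hξ j (Finset.mem_Icc.2 ⟨hj1, by omega⟩)
      · -- the decomposition equality
        rw [Finset.sum_Icc_succ_top (by omega : 1 ≤ K + 1)]
        rw [Function.update_self]
        have hsum : (Finset.Icc 1 K).sum
            (fun j => shiftMul ((j : ℤ) * m) (Function.update ξ (K + 1) x1 j)) =
            (Finset.Icc 1 K).sum (fun j => shiftMul ((j : ℤ) * m) (ξ j)) := by
          apply Finset.sum_congr rfl
          intro j hj
          rcases Finset.mem_Icc.1 hj with ⟨-, hj2⟩
          rw [Function.update_of_ne (by omega)]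
        rw [hsum]
        have hcast : ((K + 1 : ℕ) : ℤ) = (K : ℤ) + 1 := by push_cast; ring
        rw [hcast]
        try abel
  -- level bounds
  obtain ⟨Ma, hMa⟩ := exists_level_ub a
  obtain ⟨mx, hmx⟩ := exists_level_lb x
  set j₀ : ℕ := S₀.card + (Ma - mx).toNat + 1 with hj₀
  set K : ℕ := j₀ + G.pot S₀ a with hK
  obtain ⟨d, g, ξ, had, hag, hξ, hdec⟩ := main K
  -- each good piece contains a cycle element
  have hgood : ∀ j ∈ Finset.Icc j₀ K, 1 ≤ G.cycCount (shiftMul ((j : ℤ) * m) (ξ j)) := by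
    intro j hj
    rcases Finset.mem_Icc.1 hj with ⟨hj1, hj2⟩
    have hjIcc : j ∈ Finset.Icc 1 K := Finset.mem_Icc.2 ⟨by omega, hj2⟩
    have hxj := hξ j hjIcc
    have hξne : ξ j ≠ 0 := rsteps_ne_zero hxj hxne
    obtain ⟨⟨w, t⟩, hwt⟩ := Multiset.exists_mem_of_ne_zero hξne
    -- level lower bound on t
    obtain ⟨u, s, p, hus, -, hlen, -⟩ := rsteps_ancestor hxj w t hwt
    have hts : mx ≤ t := by
      have := hmx (u, s) hus
      simp only at this
      omega
    -- the shifted element lies in d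
    have hmemd : (w, t + (j : ℤ) * m) ∈ d := by
      rw [hdec]
      refine Multiset.mem_add.2 (Or.inr ?_)
      have hle : shiftMul ((j : ℤ) * m) (ξ j) ≤
          (Finset.Icc 1 K).sum (fun j => shiftMul ((j : ℤ) * m) (ξ j)) :=
        Finset.single_le_sum (f := fun (i : ℕ) => shiftMul ((i : ℤ) * m) (ξ i))
          (fun i _ => Multiset.zero_le _) hjIcc
      exact Multiset.mem_of_le hle (Multiset.mem_map.2 ⟨(w, t), hwt, rfl⟩)
    -- genealogy over a gives a long walk
    obtain ⟨u', s', p', hus', hwalk', hlen', hsrc'⟩ :=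
      rsteps_ancestor had w (t + (j : ℤ) * m) hmemd
    have hs'ub : s' ≤ Ma := by
      have := hMa (u', s') hus'
      simpa using this
    have hjm : (j : ℤ) ≤ (j : ℤ) * m := by
      nlinarith [Int.ofNat_nonneg j]
    have hlong : (S₀.card : ℤ) < (p'.length : ℤ) := by
      have h1 : ((Ma - mx).toNat : ℤ) ≥ Ma - mx := Int.self_le_toNat _
      have h2 : (j : ℤ) ≥ (j₀ : ℤ) := by exact_mod_cast hj1
      have h3 : (j₀ : ℤ) = (S₀.card : ℤ) + ((Ma - mx).toNat : ℤ) + 1 := by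
        rw [hj₀]; push_cast; ring
      omega
    have hlong' : S₀.card < p'.length := by exact_mod_cast hlong
    have hwCycV : w ∈ G.CycV :=
      long_walk_endpoint hne S₀ hwalk' hsrc' hlong'
    exact cycCount_pos (Multiset.mem_map.2 ⟨(w, t), hwt, rfl⟩) hwCycV
  -- counting
  have hcount : G.pot S₀ a + 1 ≤ G.cycCount d := by
    have hc1 : (Finset.Icc j₀ K).card ≤
        G.cycCount ((Finset.Icc j₀ K).sum (fun j => shiftMul ((j : ℤ) * m) (ξ j))) :=
      cycCount_finsum_ge hgood
    have hc2 : (Finset.Icc j₀ K).sum (fun j => shiftMul ((j : ℤ) * m) (ξ j)) ≤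
        (Finset.Icc 1 K).sum (fun j => shiftMul ((j : ℤ) * m) (ξ j)) := by
      apply Finset.sum_le_sum_of_subset
      intro j hj
      rcases Finset.mem_Icc.1 hj with ⟨hj1, hj2⟩
      exact Finset.mem_Icc.2 ⟨by omega, hj2⟩
    have hc3 := cycCount_mono (G := G) hc2
    have hc4 : (Finset.Icc 1 K).sum (fun j => shiftMul ((j : ℤ) * m) (ξ j)) ≤ d := by
      rw [hdec]
      exact le_add_self
    have hc5 := cycCount_mono (G := G) hc4
    have hcard : (Finset.Icc j₀ K).card = G.pot S₀ a + 1 := by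
      rw [Nat.card_Icc]
      omega
    omega
  have hpotd : G.pot S₀ d = G.pot S₀ a := pot_steps hne had
  have hfinal := le_trans hcount (le_trans (cycCount_le_pot d) (le_of_eq hpotd))
  omega

end Backward

end RFGraph

/-- The graph `E` has a cycle with an exit if and only if there are `a ∈ M_E^{gr}`
and a negative integer `n` with `ⁿa > a`, i.e. `ⁿa = a + x` for some nonzero `x`. -/
theorem cycle_with_exit_iff {V Ed : Type} [DecidableEq V] (G : RFGraph V Ed) :
    (∃ p : List Ed, G.IsCycle p ∧ G.HasExit p) ↔
      ∃ (a : G.TM) (n : ℤ) (x : G.TM), n < 0 ∧ x ≠ 0 ∧ G.tshift n a = a + x := by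
  constructor
  · exact RFGraph.forward_direction
  · intro h
    by_contra hnc
    exact RFGraph.backward_direction hnc h
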